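/- Let β, χ be real numbers with cos β ≠ 0, and set S = −[[i tan β, 1/cos β],[1/cos β, −i tan β]] ∈ M₂(ℂ) and E = exp(χσ₂) = (cosh χ)I + (sinh χ)σ₂. Then the intertwining relation E·S = S*·E holds if and only if tanh χ = sin β, where S* is the conjugate transpose of S. -/

import Mathlib

open Matrix Complex

/-- With `S = −[[i tan β, 1/cos β],[1/cos β, −i tan β]]` and
`E = (cosh χ)I + (sinh χ)σ₂`, the intertwining relation `E·S = Sᴴ·E` holds if and only
if `tanh χ = sin β`. -/
theorem stmt14 (β χ : ℝ) (hβ : Real.cos β ≠ 0) :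
    (((Real.cosh χ : ℂ) • (1 : Matrix (Fin 2) (Fin 2) ℂ)
        + (Real.sinh χ : ℂ) • !![(0 : ℂ), -I; I, 0]) *
      (-(!![I * Real.tan β, (1 : ℂ) / Real.cos β;
            (1 : ℂ) / Real.cos β, -I * Real.tan β]))
      = (-(!![I * Real.tan β, (1 : ℂ) / Real.cos β;
            (1 : ℂ) / Real.cos β, -I * Real.tan β]))ᴴ *
        ((Real.cosh χ : ℂ) • (1 : Matrix (Fin 2) (Fin 2) ℂ)
          + (Real.sinh χ : ℂ) • !![(0 : ℂ), -I; I, 0]))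
      ↔ Real.tanh χ = Real.sin β := by
  have hc : (Real.cos β : ℂ) ≠ 0 := Complex.ofReal_ne_zero.mpr hβ
  have hch : Real.cosh χ ≠ 0 := ne_of_gt (Real.cosh_pos χ)
  have key : Real.tanh χ = Real.sin β ↔ Real.sinh χ = Real.cosh χ * Real.sin β := by
    rw [Real.tanh_eq_sinh_div_cosh, div_eq_iff hch]; constructor <;> intro h <;> linarith
  rw [key]
  have hC : (Real.sinh χ = Real.cosh χ * Real.sin β) ↔
      ((Real.sinh χ : ℂ) = (Real.cosh χ : ℂ) * (Real.sin β : ℂ)) := by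
    constructor <;> intro h <;> exact_mod_cast h
  rw [hC]
  constructor
  · intro h
    have h00 := congrFun (congrFun h 0) 0
    simp [Matrix.mul_apply, Fin.sum_univ_two, Matrix.one_apply, Real.tan_eq_sin_div_cos,
      ← Complex.sin_conj, ← Complex.cos_conj, Complex.conj_ofReal] at h00
    have hc' : Complex.cos ↑β ≠ 0 := by rw [← Complex.ofReal_cos]; exact hc
    field_simp at h00
    push_cast
    have h2 : (Complex.sinh ↑χ - Complex.cosh ↑χ * Complex.sin ↑β)
        * (2 * Complex.I * Complex.cos ↑β ^ 2) = 0 := by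
      linear_combination (Complex.I * Complex.cos ↑β ^ 2) * h00
    rcases mul_eq_zero.mp h2 with h3 | h3
    · exact sub_eq_zero.mp h3
    · exact absurd h3 (mul_ne_zero (mul_ne_zero two_ne_zero Complex.I_ne_zero)
        (pow_ne_zero 2 hc'))
  · intro h
    ext i j
    fin_cases i <;> fin_cases j <;>
      simp [Matrix.mul_apply, Fin.sum_univ_two, Matrix.one_apply, Real.tan_eq_sin_div_cos,
        ← Complex.sin_conj, ← Complex.cos_conj, Complex.conj_ofReal] <;>
      · push_cast at h
        rw [h]; ring
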